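/- Let A be a positive normalized linear functional on L, let n ≥ 3 be odd, let f ∈ C^n([a,b]) be n-convex, and let g ∈ L with f∘g ∈ L. Then Σ_{k=2}^{n-1} f[a; b,…,b (k times)] · A[(g−a1)(g−b1)^{k−1}] ≤ LR(f,g,a,b,A) ≤ f[a,a;b] · A[(g−a1)(g−b1)] + Σ_{k=2}^{n-2} f[a,a; b,…,b (k times)] · A[(g−a1)^2 (g−b1)^{k−1}]. If instead f is n-convex and n is even, both inequality signs are reversed. -/

import Mathlib

/-- Divided difference of `f` at a (sorted) list of points, with repeated points
handled via derivatives (taken within the set `s`). -/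
noncomputable def divDiff (s : Set ℝ) (f : ℝ → ℝ) : List ℝ → ℝ
  | [] => 0
  | [x] => f x
  | x :: y :: l =>
    if x = (y :: l).getLast (List.cons_ne_nil y l) then
      iteratedDerivWithin (l.length + 1) f s x / Nat.factorial (l.length + 1)
    else
      (divDiff s f (y :: l) - divDiff s f (x :: (y :: l).dropLast)) /
        ((y :: l).getLast (List.cons_ne_nil y l) - x)
termination_by l => l.length
decreasing_by
  all_goals simp [List.length_dropLast]


/-- `f^{(j)}(y) - Taylor part at b, cutoff c`. -/
noncomputable def Pfn (s : Set ℝ) (f : ℝ → ℝ) (b : ℝ) (c j : ℕ) (y : ℝ) : ℝ :=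
  iteratedDerivWithin j f s y -
    ∑ i ∈ Finset.range (c - j), iteratedDerivWithin (i + j) f s b * (y - b) ^ i / (Nat.factorial i)

lemma hasDerivAt_taylorSum (C : ℕ → ℝ) (b : ℝ) (m : ℕ) (y : ℝ) :
    HasDerivAt (fun z => ∑ i ∈ Finset.range m, C i * (z - b) ^ i / (Nat.factorial i))
      (∑ i ∈ Finset.range (m - 1), C (i+1) * (y - b) ^ i / (Nat.factorial i)) y := by
  cases m with
  | zero => simpa using hasDerivAt_const y (0 : ℝ)
  | succ m =>
    have h : ∀ i ∈ Finset.range (m+1),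
        HasDerivAt (fun z => C i * (z - b) ^ i / (Nat.factorial i))
          ((C i / (Nat.factorial i)) * (i * (y - b) ^ (i-1))) y := by
      intro i _
      have h1 : HasDerivAt (fun z => (z - b) ^ i) (i * (y - b) ^ (i-1)) y := by
        simpa using ((hasDerivAt_id y).sub_const b).fun_pow i
      have := h1.const_mul (C i / (Nat.factorial i))
      convert this using 2 with z
      · rfl
      · rfl
      ring
    have hsum := HasDerivAt.fun_sum h
    convert hsum using 1
    · rfl
    · rfl
    rw [Finset.sum_range_succ']
    simp only [Nat.succ_sub_one]
    rw [show (∑ i ∈ Finset.range m, C (i+1) * (y - b) ^ i / (Nat.factorial i)) =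
      ∑ i ∈ Finset.range m, C (i+1) / (Nat.factorial (i+1)) * ((i+1 : ℕ) * (y - b) ^ i) by
        refine Finset.sum_congr rfl fun i _ => ?_
        rw [Nat.factorial_succ]
        push_cast
        have : ((i : ℝ) + 1) ≠ 0 := by positivity
        field_simp]
    simp

lemma hasDerivWithinAt_Pfn {a b : ℝ} {f : ℝ → ℝ} {n : ℕ} (hab : a < b)
    (hf : ContDiffOn ℝ n f (Set.Icc a b)) (c j : ℕ) (hj : j < n)
    {y : ℝ} (hy : y ∈ Set.Icc a b) :
    HasDerivWithinAt (Pfn (Set.Icc a b) f b c j) (Pfn (Set.Icc a b) f b c (j+1) y)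
      (Set.Icc a b) y := by
  have hu := uniqueDiffOn_Icc hab
  have hd := hf.differentiableOn_iteratedDerivWithin
    (show (j : WithTop ℕ∞) < n by exact_mod_cast hj) hu
  have h1 : HasDerivWithinAt (iteratedDerivWithin j f (Set.Icc a b))
      (iteratedDerivWithin (j+1) f (Set.Icc a b) y) (Set.Icc a b) y := by
    have := (hd y hy).hasDerivWithinAt
    rwa [← iteratedDerivWithin_succ] at this
  have h2 := (hasDerivAt_taylorSum
    (fun i => iteratedDerivWithin (i + j) f (Set.Icc a b) b) b (c - j) y).hasDerivWithinAt
    (s := Set.Icc a b)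
  have h3 := h1.sub h2
  convert h3 using 1
  · rfl
  · rfl
  · rfl
  unfold Pfn
  congr 1
  rw [show c - j - 1 = c - (j+1) by omega]
  exact Finset.sum_congr rfl fun i _ => by rw [show i + (j+1) = i + 1 + j by omega]

lemma Pfn_self_b {s : Set ℝ} {f : ℝ → ℝ} {b : ℝ} {c j : ℕ} (hj : j < c) :
    Pfn s f b c j b = 0 := by
  unfold Pfn
  rw [Finset.sum_eq_single 0]
  · simp
  · intro i _ hi
    rcases Nat.exists_eq_succ_of_ne_zero hi with ⟨m, rfl⟩
    simp
  · intro h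
    exact absurd (Finset.mem_range.2 (by omega)) h

lemma Pfn_of_le {s : Set ℝ} {f : ℝ → ℝ} {b : ℝ} {c j : ℕ} (hj : c ≤ j) (y : ℝ) :
    Pfn s f b c j y = iteratedDerivWithin j f s y := by
  unfold Pfn
  rw [show c - j = 0 by omega]
  simp

lemma Pfn_cutoff_succ {s : Set ℝ} {f : ℝ → ℝ} {b : ℝ} {c j : ℕ} (hj : j ≤ c) (y : ℝ) :
    Pfn s f b (c+1) j y = Pfn s f b c j y -
      iteratedDerivWithin c f s b * (y - b) ^ (c - j) / (Nat.factorial (c - j)) := by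
  unfold Pfn
  rw [show c + 1 - j = (c - j) + 1 by omega, Finset.sum_range_succ,
    show c - j + j = c by omega]
  ring

noncomputable def psiFn (s : Set ℝ) (f : ℝ → ℝ) (b : ℝ) (c j : ℕ) (y : ℝ) : ℝ :=
  Pfn s f b c (j+1) y * (y - b) - ((c - j : ℕ) : ℝ) * Pfn s f b c j y

noncomputable def chiFn (s : Set ℝ) (f : ℝ → ℝ) (b : ℝ) (c j : ℕ) (y : ℝ) : ℝ :=
  Pfn s f b c (j+2) y * (y - b) ^ 2 - 2 * ((c - j : ℕ) : ℝ) * Pfn s f b c (j+1) y * (y - b)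
    + ((c - j : ℕ) : ℝ) * (((c - j : ℕ) : ℝ) + 1) * Pfn s f b c j y

lemma hasDerivWithinAt_psi {a b : ℝ} {f : ℝ → ℝ} {n : ℕ} (hab : a < b)
    (hf : ContDiffOn ℝ n f (Set.Icc a b)) (c j : ℕ) (hj : j + 1 < n) (hjc : j < c)
    {y : ℝ} (hy : y ∈ Set.Icc a b) :
    HasDerivWithinAt (psiFn (Set.Icc a b) f b c j) (psiFn (Set.Icc a b) f b c (j+1) y)
      (Set.Icc a b) y := by
  have h1 := (hasDerivWithinAt_Pfn hab hf c (j+1) hj hy).mul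
    (((hasDerivAt_id y).sub_const b).hasDerivWithinAt)
  have h2 := (hasDerivWithinAt_Pfn hab hf c j (by omega) hy).const_mul ((c - j : ℕ) : ℝ)
  have h3 := h1.sub h2
  have heq : psiFn (Set.Icc a b) f b c j = fun z =>
      Pfn (Set.Icc a b) f b c (j+1) z * (id z - b) -
        ((c - j : ℕ) : ℝ) * Pfn (Set.Icc a b) f b c j z := by
    funext z; unfold psiFn; simp [id_eq]
  rw [heq]
  convert h3 using 1
  · rfl
  · rfl
  · rfl
  unfold psiFn
  have hc : ((c - (j+1) : ℕ) : ℝ) = ((c - j : ℕ) : ℝ) - 1 := by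
    have : c - j = (c - (j+1)) + 1 := by omega
    rw [this]; push_cast; ring
  rw [hc]
  simp only [id_eq]
  ring

lemma hasDerivWithinAt_chi {a b : ℝ} {f : ℝ → ℝ} {n : ℕ} (hab : a < b)
    (hf : ContDiffOn ℝ n f (Set.Icc a b)) (c j : ℕ) (hj : j + 2 < n) (hjc : j < c)
    {y : ℝ} (hy : y ∈ Set.Icc a b) :
    HasDerivWithinAt (chiFn (Set.Icc a b) f b c j) (chiFn (Set.Icc a b) f b c (j+1) y)
      (Set.Icc a b) y := by
  have hyb : HasDerivWithinAt (fun z => (z - b)) 1 (Set.Icc a b) y :=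
    ((hasDerivAt_id y).sub_const b).hasDerivWithinAt
  have hyb2 : HasDerivWithinAt (fun z => (z - b)^2) (2 * (y - b)) (Set.Icc a b) y := by
    simpa using (((hasDerivAt_id y).sub_const b).fun_pow 2).hasDerivWithinAt
  have h1 := (hasDerivWithinAt_Pfn hab hf c (j+2) hj hy).mul hyb2
  have h2 := (((hasDerivWithinAt_Pfn hab hf c (j+1) (by omega) hy).mul hyb).const_mul
    (2 * ((c - j : ℕ) : ℝ)))
  have h3 := (hasDerivWithinAt_Pfn hab hf c j (by omega) hy).const_mul
    (((c - j : ℕ) : ℝ) * (((c - j : ℕ) : ℝ) + 1))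
  have h4 := (h1.sub h2).add h3
  have heq : chiFn (Set.Icc a b) f b c j = fun z =>
      Pfn (Set.Icc a b) f b c (j+2) z * (z - b) ^ 2 -
        2 * ((c - j : ℕ) : ℝ) * (Pfn (Set.Icc a b) f b c (j+1) z * (z - b)) +
        ((c - j : ℕ) : ℝ) * (((c - j : ℕ) : ℝ) + 1) * Pfn (Set.Icc a b) f b c j z := by
    funext z; unfold chiFn; ring
  rw [heq]
  convert h4 using 1
  · rfl
  · rfl
  · rfl
  unfold chiFn
  have hc : ((c - (j+1) : ℕ) : ℝ) = ((c - j : ℕ) : ℝ) - 1 := by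
    have : c - j = (c - (j+1)) + 1 := by omega
    rw [this]; push_cast; ring
  rw [hc]
  ring

/-- If `h' ≤ 0` on `[a,b]` and `h b = 0` then `h ≥ 0` on `[a,b]`. -/
lemma nonneg_of_deriv_nonpos {a b : ℝ} (hab : a < b) {h h' : ℝ → ℝ}
    (hd : ∀ y ∈ Set.Icc a b, HasDerivWithinAt h (h' y) (Set.Icc a b) y)
    (h'0 : ∀ y ∈ Set.Icc a b, h' y ≤ 0) (hb : h b = 0) :
    ∀ y ∈ Set.Icc a b, 0 ≤ h y := by
  have hanti : AntitoneOn h (Set.Icc a b) := by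
    apply antitoneOn_of_deriv_nonpos (convex_Icc a b)
    · exact fun y hy => (hd y hy).continuousWithinAt
    · intro y hy
      rw [interior_Icc] at hy
      exact ((hd y (Set.mem_Icc_of_Ioo hy)).hasDerivAt
        (Icc_mem_nhds hy.1 hy.2)).differentiableAt.differentiableWithinAt
    · intro y hy
      rw [interior_Icc] at hy
      rw [((hd y (Set.mem_Icc_of_Ioo hy)).hasDerivAt (Icc_mem_nhds hy.1 hy.2)).deriv]
      exact h'0 y (Set.mem_Icc_of_Ioo hy)
  intro y hy
  have := hanti hy (Set.right_mem_Icc.2 hab.le) hy.2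
  rw [hb] at this
  exact this

lemma monotoneOn_of_hasDerivWithinAt {a b : ℝ} {h h' : ℝ → ℝ}
    (hd : ∀ y ∈ Set.Icc a b, HasDerivWithinAt h (h' y) (Set.Icc a b) y)
    (h'0 : ∀ y ∈ Set.Icc a b, 0 ≤ h' y) : MonotoneOn h (Set.Icc a b) := by
  apply monotoneOn_of_deriv_nonneg (convex_Icc a b)
  · exact fun y hy => (hd y hy).continuousWithinAt
  · intro y hy
    rw [interior_Icc] at hy
    exact ((hd y (Set.mem_Icc_of_Ioo hy)).hasDerivAt
      (Icc_mem_nhds hy.1 hy.2)).differentiableAt.differentiableWithinAt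
  · intro y hy
    rw [interior_Icc] at hy
    rw [((hd y (Set.mem_Icc_of_Ioo hy)).hasDerivAt (Icc_mem_nhds hy.1 hy.2)).deriv]
    exact h'0 y (Set.mem_Icc_of_Ioo hy)

section SignChains

variable {a b : ℝ} {f : ℝ → ℝ} {n : ℕ}

lemma psi_sign (hab : a < b) (hn : 3 ≤ n) (hf : ContDiffOn ℝ n f (Set.Icc a b))
    (hconv : ∀ x ∈ Set.Icc a b, 0 ≤ iteratedDerivWithin n f (Set.Icc a b) x) :
    ∀ m, m ≤ n - 1 → ∀ y ∈ Set.Icc a b,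
      0 ≤ (-1 : ℝ) ^ (m+1) * psiFn (Set.Icc a b) f b (n-1) (n-1-m) y := by
  intro m
  induction m with
  | zero =>
    intro _ y hy
    have h0 : psiFn (Set.Icc a b) f b (n-1) (n-1-0) y =
        iteratedDerivWithin n f (Set.Icc a b) y * (y - b) := by
      unfold psiFn
      rw [Nat.sub_zero, Nat.sub_self, Nat.cast_zero, show n - 1 + 1 = n by omega,
        Pfn_of_le (show n - 1 ≤ n by omega)]
      ring
    rw [h0]
    have h1 : y - b ≤ 0 := by linarith [hy.2]
    have h2 := mul_nonpos_of_nonneg_of_nonpos (hconv y hy) h1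
    simp only [zero_add, pow_one]
    linarith
  | succ m ih =>
    intro hm
    have hm' : m ≤ n - 1 := by omega
    have hjs : n - 1 - (m+1) + 1 = n - 1 - m := by omega
    apply nonneg_of_deriv_nonpos hab (h' := fun y =>
      (-1 : ℝ) ^ (m+1+1) * psiFn (Set.Icc a b) f b (n-1) (n - 1 - (m+1) + 1) y)
    · intro y hy
      exact (hasDerivWithinAt_psi hab hf (n-1) (n - 1 - (m+1)) (by omega) (by omega)
        hy).const_mul _
    · intro y hy
      have h2 := ih hm' y hy
      rw [hjs, pow_succ]
      nlinarith
    · have hb0 : psiFn (Set.Icc a b) f b (n-1) (n - 1 - (m+1)) b = 0 := by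
        unfold psiFn
        rw [Pfn_self_b (show n - 1 - (m+1) < n - 1 by omega), sub_self, mul_zero]
        ring
      rw [hb0]; ring

lemma chi_sign (hab : a < b) (hn : 3 ≤ n) (hf : ContDiffOn ℝ n f (Set.Icc a b))
    (hconv : ∀ x ∈ Set.Icc a b, 0 ≤ iteratedDerivWithin n f (Set.Icc a b) x) :
    ∀ m, m ≤ n - 2 → ∀ y ∈ Set.Icc a b,
      0 ≤ (-1 : ℝ) ^ m * chiFn (Set.Icc a b) f b (n-2) (n-2-m) y := by
  intro m
  induction m with
  | zero =>
    intro _ y hy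
    have h0 : chiFn (Set.Icc a b) f b (n-2) (n-2-0) y =
        iteratedDerivWithin n f (Set.Icc a b) y * (y - b) ^ 2 := by
      unfold chiFn
      rw [Nat.sub_zero, Nat.sub_self, Nat.cast_zero, show n - 2 + 2 = n by omega,
        Pfn_of_le (show n - 2 ≤ n by omega)]
      ring
    rw [h0, pow_zero, one_mul]
    exact mul_nonneg (hconv y hy) (sq_nonneg _)
  | succ m ih =>
    intro hm
    have hm' : m ≤ n - 2 := by omega
    have hjs : n - 2 - (m+1) + 1 = n - 2 - m := by omega
    apply nonneg_of_deriv_nonpos hab (h' := fun y =>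
      (-1 : ℝ) ^ (m+1) * chiFn (Set.Icc a b) f b (n-2) (n - 2 - (m+1) + 1) y)
    · intro y hy
      exact (hasDerivWithinAt_chi hab hf (n-2) (n - 2 - (m+1)) (by omega) (by omega)
        hy).const_mul _
    · intro y hy
      have h2 := ih hm' y hy
      rw [hjs, pow_succ]
      nlinarith
    · have hb0 : chiFn (Set.Icc a b) f b (n-2) (n - 2 - (m+1)) b = 0 := by
        unfold chiFn
        rw [Pfn_self_b (show n - 2 - (m+1) < n - 2 by omega), sub_self, mul_zero]
        ring
      rw [hb0]; ring

end SignChains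



lemma divDiff_single (s : Set ℝ) (f : ℝ → ℝ) (x : ℝ) : divDiff s f [x] = f x := by
  simp [divDiff]

lemma divDiff_cons_concat (s : Set ℝ) (f : ℝ → ℝ) (b x : ℝ) (l : List ℝ) (hx : x ≠ b) :
    divDiff s f (x :: (l ++ [b])) =
      (divDiff s f (l ++ [b]) - divDiff s f (x :: l)) / (b - x) := by
  cases l with
  | nil => simp only [List.nil_append]; rw [divDiff.eq_3]; simp [hx]
  | cons y l' =>
    rw [show x :: (y :: l' ++ [b]) = x :: y :: (l' ++ [b]) by simp, divDiff.eq_3]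
    have hg : (y :: (l' ++ [b])).getLast (List.cons_ne_nil _ _) = b := by
      rw [List.getLast_cons (by simp)]
      exact List.getLast_concat
    have hd : (y :: (l' ++ [b])).dropLast = y :: l' := by
      rw [show y :: (l' ++ [b]) = (y :: l') ++ [b] by simp]
      exact List.dropLast_concat
    rw [hg, hd]
    simp [hx]

lemma divDiff_replicate (s : Set ℝ) (f : ℝ → ℝ) (b : ℝ) (k : ℕ) :
    divDiff s f (List.replicate (k+1) b) = iteratedDerivWithin k f s b / (Nat.factorial k) := by
  cases k with
  | zero => simp [divDiff, List.replicate]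
  | succ m =>
    have h2 : List.replicate (m+2) b = b :: b :: List.replicate m b := by
      simp [List.replicate_succ]
    rw [h2, divDiff.eq_3]
    have hl : (b :: List.replicate m b).getLast (List.cons_ne_nil _ _) = b := by
      have h3 : b :: List.replicate m b = List.replicate m b ++ [b] := by
        rw [← List.replicate_succ, List.replicate_succ']
      simp [h3, List.getLast_concat]
    simp [hl, List.length_replicate]

lemma divDiff_pair_aa (s : Set ℝ) (f : ℝ → ℝ) (a : ℝ) :
    divDiff s f [a, a] = iteratedDerivWithin 1 f s a := by
  rw [divDiff.eq_3]; simp [Nat.factorial]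

lemma divDiff_pair (s : Set ℝ) (f : ℝ → ℝ) (x y : ℝ) (h : x ≠ y) :
    divDiff s f [x, y] = (f y - f x) / (y - x) := by
  rw [divDiff.eq_3]; simp [h, divDiff]

lemma divDiff_xaa (s : Set ℝ) (f : ℝ → ℝ) (a x : ℝ) (h : x ≠ a) :
    divDiff s f [x, a, a] =
      (divDiff s f [a, a] - divDiff s f [x, a]) / (a - x) := by
  rw [divDiff.eq_3]; simp [h, divDiff.eq_3]

noncomputable def phiFn (s : Set ℝ) (f : ℝ → ℝ) (b : ℝ) (c : ℕ) (y : ℝ) : ℝ :=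
  Pfn s f b c 0 y / (y - b) ^ c

noncomputable def phiD (s : Set ℝ) (f : ℝ → ℝ) (b : ℝ) (c : ℕ) (y : ℝ) : ℝ :=
  psiFn s f b c 0 y / (y - b) ^ (c + 1)

noncomputable def phiDD (s : Set ℝ) (f : ℝ → ℝ) (b : ℝ) (c : ℕ) (y : ℝ) : ℝ :=
  chiFn s f b c 0 y / (y - b) ^ (c + 2)

lemma phiFn_zero (s : Set ℝ) (f : ℝ → ℝ) (b : ℝ) (y : ℝ) : phiFn s f b 0 y = f y := by
  unfold phiFn Pfn
  simp [iteratedDerivWithin_zero]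

lemma hasDerivWithinAt_phi {a b : ℝ} {f : ℝ → ℝ} {n : ℕ} (hab : a < b) (hn : 1 ≤ n)
    (hf : ContDiffOn ℝ n f (Set.Icc a b)) (c : ℕ) (hc : 1 ≤ c)
    {y : ℝ} (hy : y ∈ Set.Icc a b) (hyb : y ≠ b) :
    HasDerivWithinAt (phiFn (Set.Icc a b) f b c) (phiD (Set.Icc a b) f b c y)
      (Set.Icc a b) y := by
  obtain ⟨d, rfl⟩ : ∃ d, c = d + 1 := ⟨c - 1, by omega⟩
  have hden : HasDerivWithinAt (fun z => (z - b) ^ (d+1))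
      (((d:ℝ)+1) * (y - b) ^ d) (Set.Icc a b) y := by
    have := (((hasDerivAt_id y).sub_const b).fun_pow (d+1)).hasDerivWithinAt (s := Set.Icc a b)
    simpa using this
  have hne : (y - b) ^ (d+1) ≠ 0 := pow_ne_zero _ (sub_ne_zero.2 hyb)
  have h := (hasDerivWithinAt_Pfn hab hf (d+1) 0 (by omega) hy).div hden hne
  have heq : phiFn (Set.Icc a b) f b (d+1) = fun z =>
      Pfn (Set.Icc a b) f b (d+1) 0 z / (z - b) ^ (d+1) := rfl
  rw [heq]
  convert h using 1
  · rfl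
  · rfl
  · rfl
  unfold phiD psiFn
  have hyb' : y - b ≠ 0 := sub_ne_zero.2 hyb
  field_simp
  push_cast
  ring

lemma hasDerivWithinAt_phiD {a b : ℝ} {f : ℝ → ℝ} {n : ℕ} (hab : a < b) (hn : 2 ≤ n)
    (hf : ContDiffOn ℝ n f (Set.Icc a b)) (c : ℕ) (hc : 1 ≤ c)
    {y : ℝ} (hy : y ∈ Set.Icc a b) (hyb : y ≠ b) :
    HasDerivWithinAt (phiD (Set.Icc a b) f b c) (phiDD (Set.Icc a b) f b c y)
      (Set.Icc a b) y := by
  obtain ⟨d, rfl⟩ : ∃ d, c = d + 1 := ⟨c - 1, by omega⟩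
  have hden : HasDerivWithinAt (fun z => (z - b) ^ (d+2))
      (((d:ℝ)+2) * (y - b) ^ (d+1)) (Set.Icc a b) y := by
    have := (((hasDerivAt_id y).sub_const b).fun_pow (d+2)).hasDerivWithinAt (s := Set.Icc a b)
    simpa using this
  have hne : (y - b) ^ (d+2) ≠ 0 := pow_ne_zero _ (sub_ne_zero.2 hyb)
  have hnum := hasDerivWithinAt_psi hab hf (d+1) 0 (by omega) (by omega) hy
  have h := hnum.div hden hne
  have heq : phiD (Set.Icc a b) f b (d+1) = fun z =>
      psiFn (Set.Icc a b) f b (d+1) 0 z / (z - b) ^ (d+1+1) := rfl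
  rw [heq]
  convert h using 1
  · rfl
  · rfl
  · rfl
  unfold phiDD chiFn psiFn
  have hyb' : y - b ≠ 0 := sub_ne_zero.2 hyb
  have hc1 : ((d + 1 - 1 : ℕ) : ℝ) = (d : ℝ) := by norm_num
  have hc0 : ((d + 1 - 0 : ℕ) : ℝ) = (d : ℝ) + 1 := by norm_num
  rw [hc1, hc0]
  field_simp
  ring

section ClosedForms

variable {a b : ℝ} {f : ℝ → ℝ}

lemma R_closed (hab : a < b) (y : ℝ) (hyb : y ≠ b) :
    ∀ k, divDiff (Set.Icc a b) f (y :: List.replicate k b) = phiFn (Set.Icc a b) f b k y := by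
  intro k
  induction k with
  | zero => simp [divDiff_single, phiFn_zero]
  | succ k ih =>
    rw [List.replicate_succ' (n := k) (a := b), divDiff_cons_concat _ _ _ _ _ hyb,
      ← List.replicate_succ' (n := k) (a := b), divDiff_replicate, ih]
    unfold phiFn
    rw [Pfn_cutoff_succ (Nat.zero_le k), Nat.sub_zero]
    have h1 : y - b ≠ 0 := sub_ne_zero.2 hyb
    have h1' : b - y ≠ 0 := fun h => h1 (by linarith [sub_eq_zero.1 h])
    have h2 : (Nat.factorial k : ℝ) ≠ 0 := Nat.cast_ne_zero.2 (Nat.factorial_ne_zero k)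
    have h4 : (y - b) ^ k ≠ 0 := pow_ne_zero _ h1
    rw [div_sub_div _ _ h2 h4, div_div, div_eq_div_iff (by exact mul_ne_zero (mul_ne_zero h2 h4) h1') (pow_ne_zero _ h1)]
    field_simp
    ring

lemma S_closed (hab : a < b) (x : ℝ) (hxa : x ≠ a) (hxb : x ≠ b) :
    ∀ k, divDiff (Set.Icc a b) f (x :: a :: List.replicate k b) =
      (phiFn (Set.Icc a b) f b k x - phiFn (Set.Icc a b) f b k a) / (x - a) := by
  have hax : a - x ≠ 0 := sub_ne_zero.2 (Ne.symm hxa)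
  have hxa' : x - a ≠ 0 := sub_ne_zero.2 hxa
  have hxb' : x - b ≠ 0 := sub_ne_zero.2 hxb
  have hab' : a - b ≠ 0 := sub_ne_zero.2 hab.ne
  intro k
  induction k with
  | zero =>
    show divDiff (Set.Icc a b) f [x, a] = _
    rw [divDiff_pair _ _ _ _ hxa, phiFn_zero, phiFn_zero]
    field_simp
    ring
  | succ k ih =>
    have hl : x :: a :: List.replicate (k+1) b = x :: ((a :: List.replicate k b) ++ [b]) := by
      simp [List.replicate_succ' (n := k) (a := b)]
    rw [hl, divDiff_cons_concat _ _ _ _ _ hxb,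
      show (a :: List.replicate k b) ++ [b] = a :: List.replicate (k+1) b by
        simp [List.replicate_succ' (n := k) (a := b)],
      R_closed hab a hab.ne, ih]
    unfold phiFn
    rw [Pfn_cutoff_succ (Nat.zero_le k), Pfn_cutoff_succ (Nat.zero_le k), Nat.sub_zero]
    have h2 : (Nat.factorial k : ℝ) ≠ 0 := Nat.cast_ne_zero.2 (Nat.factorial_ne_zero k)
    have hbx : b - x ≠ 0 := sub_ne_zero.2 (Ne.symm hxb)
    field_simp
    ring

lemma W_closed (hab : a < b) :
    ∀ k, divDiff (Set.Icc a b) f (a :: a :: List.replicate k b) = phiD (Set.Icc a b) f b k a := by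
  have hab' : a - b ≠ 0 := sub_ne_zero.2 hab.ne
  have hba : b - a ≠ 0 := sub_ne_zero.2 hab.ne'
  intro k
  induction k with
  | zero =>
    show divDiff (Set.Icc a b) f [a, a] = _
    rw [divDiff_pair_aa]
    unfold phiD psiFn
    rw [Pfn_of_le (Nat.zero_le 1), Nat.sub_zero, Nat.cast_zero]
    field_simp
    ring
  | succ k ih =>
    have hl : a :: a :: List.replicate (k+1) b = a :: ((a :: List.replicate k b) ++ [b]) := by
      simp [List.replicate_succ' (n := k) (a := b)]
    rw [hl, divDiff_cons_concat _ _ _ _ _ hab.ne,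
      show (a :: List.replicate k b) ++ [b] = a :: List.replicate (k+1) b by
        simp [List.replicate_succ' (n := k) (a := b)],
      R_closed hab a hab.ne, ih]
    unfold phiFn phiD psiFn
    rcases Nat.eq_zero_or_pos k with hk | hk
    · subst hk
      unfold Pfn
      simp only [Nat.sub_self, Nat.sub_zero, Finset.range_zero, Finset.sum_empty,
        Finset.range_one, Finset.sum_singleton, iteratedDerivWithin_zero,
        Nat.factorial_zero, Nat.cast_one, Nat.cast_zero, pow_zero, zero_add, Nat.add_zero]
      field_simp
      ring
    · obtain ⟨m, rfl⟩ : ∃ m, k = m + 1 := ⟨k - 1, by omega⟩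
      rw [Pfn_cutoff_succ (Nat.zero_le (m+1)), Pfn_cutoff_succ (show 1 ≤ m + 1 by omega)]
      simp only [Nat.sub_zero, Nat.add_sub_cancel, Nat.cast_zero, zero_add]
      have h2 : (Nat.factorial (m+1) : ℝ) ≠ 0 := Nat.cast_ne_zero.2 (Nat.factorial_ne_zero _)
      have h3 : (Nat.factorial m : ℝ) ≠ 0 := Nat.cast_ne_zero.2 (Nat.factorial_ne_zero _)
      have hfac : (Nat.factorial (m+1) : ℝ) = ((m:ℝ)+1) * Nat.factorial m := by
        rw [Nat.factorial_succ]; push_cast; ring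
      rw [hfac]
      have hm1 : ((m:ℝ) + 1) ≠ 0 := by positivity
      push_cast
      field_simp
      ring

end ClosedForms

section Signs

variable {a b : ℝ} {f : ℝ → ℝ} {n : ℕ}

lemma neg_one_pow_mul_pow_pos {y b : ℝ} (h : y < b) (n : ℕ) :
    0 < (-1 : ℝ) ^ n * (y - b) ^ n := by
  have : (-1 : ℝ) ^ n * (y - b) ^ n = (b - y) ^ n := by
    rw [← mul_pow]; congr 1; ring
  rw [this]
  exact pow_pos (by linarith) n

lemma div_pow_sign_nonneg {p y b : ℝ} (h : y < b) {n : ℕ} (hp : 0 ≤ (-1 : ℝ) ^ n * p) :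
    0 ≤ p / (y - b) ^ n := by
  have hne : ((-1 : ℝ) ^ n) ≠ 0 := pow_ne_zero _ (by norm_num)
  rw [show p / (y - b) ^ n = ((-1:ℝ)^n * p) / ((-1:ℝ)^n * (y - b) ^ n) from
    (mul_div_mul_left _ _ hne).symm]
  exact div_nonneg hp (neg_one_pow_mul_pow_pos h n).le

lemma phiD_nonneg (hab : a < b) (hn : 3 ≤ n) (hf : ContDiffOn ℝ n f (Set.Icc a b))
    (hconv : ∀ x ∈ Set.Icc a b, 0 ≤ iteratedDerivWithin n f (Set.Icc a b) x)
    {y : ℝ} (hy : y ∈ Set.Icc a b) (hyb : y < b) :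
    0 ≤ phiD (Set.Icc a b) f b (n-1) y := by
  have h1 := psi_sign hab hn hf hconv (n-1) (le_refl _) y hy
  rw [Nat.sub_self] at h1
  unfold phiD
  rw [show n - 1 + 1 = n by omega]
  apply div_pow_sign_nonneg hyb
  rwa [show n - 1 + 1 = n by omega] at h1

lemma phiDD_nonneg (hab : a < b) (hn : 3 ≤ n) (hf : ContDiffOn ℝ n f (Set.Icc a b))
    (hconv : ∀ x ∈ Set.Icc a b, 0 ≤ iteratedDerivWithin n f (Set.Icc a b) x)
    {y : ℝ} (hy : y ∈ Set.Icc a b) (hyb : y < b) :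
    0 ≤ phiDD (Set.Icc a b) f b (n-2) y := by
  have h1 := chi_sign hab hn hf hconv (n-2) (le_refl _) y hy
  rw [Nat.sub_self] at h1
  unfold phiDD
  rw [show n - 2 + 2 = n by omega]
  apply div_pow_sign_nonneg hyb
  rwa [show (-1:ℝ) ^ (n-2) = (-1:ℝ) ^ n by
    conv_rhs => rw [show n = (n-2)+2 by omega]
    rw [pow_add]; norm_num] at h1

lemma S_sign (hab : a < b) (hn : 3 ≤ n) (hf : ContDiffOn ℝ n f (Set.Icc a b))
    (hconv : ∀ x ∈ Set.Icc a b, 0 ≤ iteratedDerivWithin n f (Set.Icc a b) x)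
    {x : ℝ} (hx : x ∈ Set.Ioo a b) :
    0 ≤ divDiff (Set.Icc a b) f (x :: a :: List.replicate (n-1) b) := by
  rw [S_closed hab x (ne_of_gt hx.1) (ne_of_lt hx.2)]
  have hsub : Set.Icc a x ⊆ Set.Icc a b := Set.Icc_subset_Icc_right hx.2.le
  have hmem : ∀ y ∈ Set.Icc a x, y ∈ Set.Icc a b := fun y hy => hsub hy
  have hmono : MonotoneOn (phiFn (Set.Icc a b) f b (n-1)) (Set.Icc a x) := by
    apply monotoneOn_of_hasDerivWithinAt
      (h' := fun y => phiD (Set.Icc a b) f b (n-1) y)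
    · intro y hy
      exact (hasDerivWithinAt_phi hab (by omega) hf (n-1) (by omega) (hmem y hy)
        (by rcases hy with ⟨_, h2⟩; exact ne_of_lt (lt_of_le_of_lt h2 hx.2))).mono hsub
    · intro y hy
      exact phiD_nonneg hab hn hf hconv (hmem y hy) (lt_of_le_of_lt hy.2 hx.2)
  apply div_nonneg _ (by linarith [hx.1])
  have := hmono (Set.left_mem_Icc.2 hx.1.le) (Set.right_mem_Icc.2 hx.1.le) hx.1.le
  linarith

lemma T_identity (hab : a < b) {x : ℝ} (hxa : x ≠ a) (hxb : x ≠ b) :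
    ∀ k, divDiff (Set.Icc a b) f (x :: a :: a :: List.replicate k b) =
      (divDiff (Set.Icc a b) f (x :: a :: List.replicate k b) -
        divDiff (Set.Icc a b) f (a :: a :: List.replicate k b)) / (x - a) := by
  have hxa' : x - a ≠ 0 := sub_ne_zero.2 hxa
  have hbx : b - x ≠ 0 := sub_ne_zero.2 (Ne.symm hxb)
  have hba : b - a ≠ 0 := sub_ne_zero.2 hab.ne'
  intro k
  induction k with
  | zero =>
    show divDiff (Set.Icc a b) f [x, a, a] = _
    rw [divDiff_xaa _ _ _ _ hxa]
    rw [show divDiff (Set.Icc a b) f [a, a] - divDiff (Set.Icc a b) f [x, a] =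
      -(divDiff (Set.Icc a b) f [x, a] - divDiff (Set.Icc a b) f [a, a]) by ring,
      show a - x = -(x - a) by ring, neg_div_neg_eq]
    rfl
  | succ k ih =>
    have l1 : x :: a :: a :: List.replicate (k+1) b =
        x :: ((a :: a :: List.replicate k b) ++ [b]) := by
      simp [List.replicate_succ' (n := k) (a := b)]
    have l2 : x :: a :: List.replicate (k+1) b =
        x :: ((a :: List.replicate k b) ++ [b]) := by
      simp [List.replicate_succ' (n := k) (a := b)]
    have l3 : a :: a :: List.replicate (k+1) b =
        a :: ((a :: List.replicate k b) ++ [b]) := by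
      simp [List.replicate_succ' (n := k) (a := b)]
    have l4 : (a :: a :: List.replicate k b) ++ [b] = a :: a :: List.replicate (k+1) b := by
      simp [List.replicate_succ' (n := k) (a := b)]
    have l5 : (a :: List.replicate k b) ++ [b] = a :: List.replicate (k+1) b := by
      simp [List.replicate_succ' (n := k) (a := b)]
    rw [l1, divDiff_cons_concat _ _ _ _ _ hxb, l4, l3,
      divDiff_cons_concat _ _ _ _ _ hab.ne, l5, ih,
      l2, divDiff_cons_concat _ _ _ _ _ hxb, l5]
    field_simp
    ring

lemma T_sign (hab : a < b) (hn : 3 ≤ n) (hf : ContDiffOn ℝ n f (Set.Icc a b))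
    (hconv : ∀ x ∈ Set.Icc a b, 0 ≤ iteratedDerivWithin n f (Set.Icc a b) x)
    {x : ℝ} (hx : x ∈ Set.Ioo a b) :
    0 ≤ divDiff (Set.Icc a b) f (x :: a :: a :: List.replicate (n-2) b) := by
  have hxa : x - a ≠ 0 := sub_ne_zero.2 (ne_of_gt hx.1)
  rw [T_identity hab (ne_of_gt hx.1) (ne_of_lt hx.2) (n-2),
    S_closed hab x (ne_of_gt hx.1) (ne_of_lt hx.2), W_closed hab]
  set c := n - 2 with hc
  set φ := phiFn (Set.Icc a b) f b c with hφ
  set D := phiD (Set.Icc a b) f b c a with hD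
  have key : ((φ x - φ a) / (x - a) - D) / (x - a) =
      (φ x - φ a - D * (x - a)) / (x - a) ^ 2 := by
    field_simp
  rw [key]
  apply div_nonneg _ (by positivity)
  have hsub : Set.Icc a x ⊆ Set.Icc a b := Set.Icc_subset_Icc_right hx.2.le
  have hmem : ∀ y ∈ Set.Icc a x, y ∈ Set.Icc a b := fun y hy => hsub hy
  have hneb : ∀ y ∈ Set.Icc a x, y ≠ b := fun y hy =>
    ne_of_lt (lt_of_le_of_lt hy.2 hx.2)
  have hmonoD : MonotoneOn (phiD (Set.Icc a b) f b c) (Set.Icc a x) := by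
    apply monotoneOn_of_hasDerivWithinAt
      (h' := fun y => phiDD (Set.Icc a b) f b c y)
    · intro y hy
      exact (hasDerivWithinAt_phiD hab (by omega) hf c (by omega) (hmem y hy)
        (hneb y hy)).mono hsub
    · intro y hy
      exact phiDD_nonneg hab hn hf hconv (hmem y hy) (lt_of_le_of_lt hy.2 hx.2)
  have hF : MonotoneOn (fun y => φ y - φ a - D * (y - a)) (Set.Icc a x) := by
    apply monotoneOn_of_hasDerivWithinAt
      (h' := fun y => phiD (Set.Icc a b) f b c y - D)
    · intro y hy
      have h1 : HasDerivWithinAt φ (phiD (Set.Icc a b) f b c y) (Set.Icc a x) y :=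
        (hasDerivWithinAt_phi hab (by omega) hf c (by omega) (hmem y hy)
          (hneb y hy)).mono hsub
      have h2 : HasDerivWithinAt (fun y => φ a + D * (y - a)) D (Set.Icc a x) y := by
        have := (((hasDerivAt_id y).sub_const a).const_mul D).const_add (φ a)
        simpa using this.hasDerivWithinAt
      have := h1.sub h2
      convert this using 2 with z
      · rfl
      · rfl
      simp only [Pi.sub_apply]
      ring
    · intro y hy
      have := hmonoD (Set.left_mem_Icc.2 hx.1.le) hy hy.1
      simp only [sub_nonneg]
      exact this
  have h0 := hF (Set.left_mem_Icc.2 hx.1.le) (Set.right_mem_Icc.2 hx.1.le) hx.1.le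
  simp only [sub_self, mul_zero, sub_zero] at h0
  linarith [h0]

end Signs

section Expansions

variable {a b : ℝ} {f : ℝ → ℝ} {n : ℕ}

lemma expansion1 (hab : a < b) {x : ℝ} (hxa : x ≠ a) (hxb : x ≠ b) :
    ∀ m, f x = f a +
      (∑ k ∈ Finset.range m,
        divDiff (Set.Icc a b) f (a :: List.replicate (k+1) b) * ((x-a)*(x-b)^k)) +
      divDiff (Set.Icc a b) f (x :: a :: List.replicate m b) * ((x-a)*(x-b)^m) := by
  have hax : a - x ≠ 0 := sub_ne_zero.2 (Ne.symm hxa)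
  have hbx : b - x ≠ 0 := sub_ne_zero.2 (Ne.symm hxb)
  intro m
  induction m with
  | zero =>
    show f x = f a + 0 + divDiff (Set.Icc a b) f [x, a] * ((x-a) * 1)
    rw [divDiff_pair _ _ _ _ hxa]
    field_simp
    ring
  | succ m ih =>
    have l2 : x :: a :: List.replicate (m+1) b =
        x :: ((a :: List.replicate m b) ++ [b]) := by
      simp [List.replicate_succ' (n := m) (a := b)]
    have l5 : (a :: List.replicate m b) ++ [b] = a :: List.replicate (m+1) b := by
      simp [List.replicate_succ' (n := m) (a := b)]
    have hrec : divDiff (Set.Icc a b) f (x :: a :: List.replicate (m+1) b) =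
        (divDiff (Set.Icc a b) f (a :: List.replicate (m+1) b) -
          divDiff (Set.Icc a b) f (x :: a :: List.replicate m b)) / (b - x) := by
      rw [l2, divDiff_cons_concat _ _ _ _ _ hxb, l5]
    rw [Finset.sum_range_succ, hrec, ih]
    generalize (∑ k ∈ Finset.range m,
      divDiff (Set.Icc a b) f (a :: List.replicate (k+1) b) * ((x-a)*(x-b)^k)) = S
    field_simp
    ring

lemma expansion2 (hab : a < b) {x : ℝ} (hxa : x ≠ a) (hxb : x ≠ b) :
    ∀ m, f x = f a + divDiff (Set.Icc a b) f [a, a] * (x - a) +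
      (∑ k ∈ Finset.range m,
        divDiff (Set.Icc a b) f (a :: a :: List.replicate (k+1) b) * ((x-a)^2*(x-b)^k)) +
      divDiff (Set.Icc a b) f (x :: a :: a :: List.replicate m b) * ((x-a)^2*(x-b)^m) := by
  have hax : a - x ≠ 0 := sub_ne_zero.2 (Ne.symm hxa)
  have hbx : b - x ≠ 0 := sub_ne_zero.2 (Ne.symm hxb)
  intro m
  induction m with
  | zero =>
    show f x = f a + divDiff (Set.Icc a b) f [a, a] * (x - a) + 0 +
      divDiff (Set.Icc a b) f [x, a, a] * ((x-a)^2 * 1)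
    rw [divDiff_xaa _ _ _ _ hxa, divDiff_pair _ _ _ _ hxa]
    field_simp
    ring
  | succ m ih =>
    have l1 : x :: a :: a :: List.replicate (m+1) b =
        x :: ((a :: a :: List.replicate m b) ++ [b]) := by
      simp [List.replicate_succ' (n := m) (a := b)]
    have l4 : (a :: a :: List.replicate m b) ++ [b] = a :: a :: List.replicate (m+1) b := by
      simp [List.replicate_succ' (n := m) (a := b)]
    have hrec : divDiff (Set.Icc a b) f (x :: a :: a :: List.replicate (m+1) b) =
        (divDiff (Set.Icc a b) f (a :: a :: List.replicate (m+1) b) -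
          divDiff (Set.Icc a b) f (x :: a :: a :: List.replicate m b)) / (b - x) := by
      rw [l1, divDiff_cons_concat _ _ _ _ _ hxb, l4]
    rw [Finset.sum_range_succ, hrec, ih]
    field_simp
    ring

lemma sum_shift_Icc (G : ℕ → ℝ) (m : ℕ) :
    ∑ k ∈ Finset.range (m+1), G (k+1) = G 1 + ∑ k ∈ Finset.Icc 2 (m+1), G k := by
  induction m with
  | zero => simp
  | succ m ih =>
    rw [Finset.sum_range_succ, ih, Finset.sum_Icc_succ_top (by omega : 2 ≤ m + 1 + 1)]
    ring

/-- Pointwise lower/upper Newton identity with nonnegative remainder coefficient,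
nodes `a, b^(n-1)`. -/
lemma remainder1 (hab : a < b) (hn : 3 ≤ n) (hf : ContDiffOn ℝ n f (Set.Icc a b))
    (hconv : ∀ x ∈ Set.Icc a b, 0 ≤ iteratedDerivWithin n f (Set.Icc a b) x)
    {x : ℝ} (hx : x ∈ Set.Icc a b) :
    ∃ r, 0 ≤ r ∧ f x = ((b-x)*f a + (x-a)*f b)/(b-a) +
      (∑ k ∈ Finset.Icc 2 (n-1),
        divDiff (Set.Icc a b) f (a :: List.replicate k b) * ((x-a)*(x-b)^(k-1))) +
      r * ((x-a)*(x-b)^(n-1)) := by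
  have hba : b - a ≠ 0 := sub_ne_zero.2 hab.ne'
  rcases eq_or_ne x a with rfl | hxa
  · refine ⟨0, le_refl 0, ?_⟩
    rw [Finset.sum_eq_zero fun k _ => by ring]
    field_simp
    ring
  rcases eq_or_ne x b with rfl | hxb
  · refine ⟨0, le_refl 0, ?_⟩
    rw [Finset.sum_eq_zero fun k hk => by
      rw [Finset.mem_Icc] at hk
      rw [sub_self, zero_pow (show k - 1 ≠ 0 by omega)]
      ring]
    field_simp
    ring
  · refine ⟨divDiff (Set.Icc a b) f (x :: a :: List.replicate (n-1) b), ?_, ?_⟩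
    · exact S_sign hab hn hf hconv ⟨lt_of_le_of_ne hx.1 (Ne.symm hxa), lt_of_le_of_ne hx.2 hxb⟩
    · have h1 := expansion1 (f := f) hab hxa hxb (n-1)
      have h2 : ∑ k ∈ Finset.range (n-1),
          divDiff (Set.Icc a b) f (a :: List.replicate (k+1) b) * ((x-a)*(x-b)^k) =
          divDiff (Set.Icc a b) f (a :: List.replicate 1 b) * ((x-a)*(x-b)^0) +
          ∑ k ∈ Finset.Icc 2 (n-1),
            divDiff (Set.Icc a b) f (a :: List.replicate k b) * ((x-a)*(x-b)^(k-1)) := by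
        have hshift := sum_shift_Icc (fun k => divDiff (Set.Icc a b) f
          (a :: List.replicate k b) * ((x-a)*(x-b)^(k-1))) (n-2)
        simp only [Nat.add_sub_cancel] at hshift
        rw [show n - 2 + 1 = n - 1 by omega] at hshift
        exact hshift
      rw [h2] at h1
      have h3 : divDiff (Set.Icc a b) f (a :: List.replicate 1 b) = (f b - f a)/(b - a) := by
        show divDiff (Set.Icc a b) f [a, b] = _
        exact divDiff_pair _ _ _ _ hab.ne
      rw [h3] at h1
      rw [h1]
      field_simp
      ring

/-- Pointwise Newton identity with nonnegative remainder coefficient,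
nodes `a, a, b^(n-2)`. -/
lemma remainder2 (hab : a < b) (hn : 3 ≤ n) (hf : ContDiffOn ℝ n f (Set.Icc a b))
    (hconv : ∀ x ∈ Set.Icc a b, 0 ≤ iteratedDerivWithin n f (Set.Icc a b) x)
    {x : ℝ} (hx : x ∈ Set.Icc a b) :
    ∃ r, 0 ≤ r ∧ f x = ((b-x)*f a + (x-a)*f b)/(b-a) +
      divDiff (Set.Icc a b) f [a, a, b] * ((x-a)*(x-b)) +
      (∑ k ∈ Finset.Icc 2 (n-2),
        divDiff (Set.Icc a b) f (a :: a :: List.replicate k b) * ((x-a)^2*(x-b)^(k-1))) +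
      r * ((x-a)^2*(x-b)^(n-2)) := by
  have hba : b - a ≠ 0 := sub_ne_zero.2 hab.ne'
  rcases eq_or_ne x a with rfl | hxa
  · refine ⟨0, le_refl 0, ?_⟩
    rw [Finset.sum_eq_zero fun k _ => by ring]
    field_simp
    ring
  rcases eq_or_ne x b with rfl | hxb
  · refine ⟨0, le_refl 0, ?_⟩
    rw [Finset.sum_eq_zero fun k hk => by
      rw [Finset.mem_Icc] at hk
      rw [sub_self, zero_pow (show k - 1 ≠ 0 by omega)]
      ring]
    field_simp
    ring
  · refine ⟨divDiff (Set.Icc a b) f (x :: a :: a :: List.replicate (n-2) b), ?_, ?_⟩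
    · exact T_sign hab hn hf hconv ⟨lt_of_le_of_ne hx.1 (Ne.symm hxa), lt_of_le_of_ne hx.2 hxb⟩
    · have h1 := expansion2 (f := f) hab hxa hxb (n-2)
      have h2 : ∑ k ∈ Finset.range (n-2),
          divDiff (Set.Icc a b) f (a :: a :: List.replicate (k+1) b) * ((x-a)^2*(x-b)^k) =
          divDiff (Set.Icc a b) f (a :: a :: List.replicate 1 b) * ((x-a)^2*(x-b)^0) +
          ∑ k ∈ Finset.Icc 2 (n-2),
            divDiff (Set.Icc a b) f (a :: a :: List.replicate k b) * ((x-a)^2*(x-b)^(k-1)) := by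
        have hshift := sum_shift_Icc (fun k => divDiff (Set.Icc a b) f
          (a :: a :: List.replicate k b) * ((x-a)^2*(x-b)^(k-1))) (n-3)
        simp only [Nat.add_sub_cancel] at hshift
        rw [show n - 3 + 1 = n - 2 by omega] at hshift
        exact hshift
      rw [h2] at h1
      -- relation between [a,a,b], [a,b], [a,a]
      have hW1 : divDiff (Set.Icc a b) f [a, a, b] =
          ((f b - f a)/(b-a) - divDiff (Set.Icc a b) f [a, a]) / (b - a) := by
        have : ([a, a, b] : List ℝ) = a :: (([a] : List ℝ) ++ [b]) := by simp
        rw [this, divDiff_cons_concat _ _ _ _ _ hab.ne]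
        rw [show (([a] : List ℝ) ++ [b]) = [a, b] by simp, divDiff_pair _ _ _ _ hab.ne]
      have h3 : divDiff (Set.Icc a b) f (a :: a :: List.replicate 1 b) =
          divDiff (Set.Icc a b) f [a, a, b] := rfl
      rw [h3] at h1
      rw [h1, hW1]
      field_simp
      ring

end Expansions


/-- Theorem 2.3: two-sided Edmundson–Lah–Ribarič type bounds for `n`-convex
functions (`n ≥ 3`); the stated inequalities hold when `n` is odd and are
reversed when `n` is even. -/
theorem thm23 {E : Type*} [Nonempty E]
    (a b : ℝ) (hab : a < b) (n : ℕ) (hn : 3 ≤ n)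
    (f : ℝ → ℝ) (hf : ContDiffOn ℝ n f (Set.Icc a b))
    (hconv : ∀ x ∈ Set.Icc a b, 0 ≤ iteratedDerivWithin n f (Set.Icc a b) x)
    (A : (E → ℝ) →ₗ[ℝ] ℝ)
    (hApos : ∀ h : E → ℝ, (∀ t, 0 ≤ h t) → 0 ≤ A h)
    (hA1 : A (fun _ => (1 : ℝ)) = 1)
    (g : E → ℝ) (hg : ∀ t, g t ∈ Set.Icc a b) :
    (Odd n →
      (∑ k ∈ Finset.Icc 2 (n - 1),
        divDiff (Set.Icc a b) f (a :: List.replicate k b) *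
          A (fun t => (g t - a) * (g t - b) ^ (k - 1))) ≤
        A (fun t => f (g t)) - (b - A g) / (b - a) * f a - (A g - a) / (b - a) * f b ∧
      A (fun t => f (g t)) - (b - A g) / (b - a) * f a - (A g - a) / (b - a) * f b ≤
        divDiff (Set.Icc a b) f [a, a, b] * A (fun t => (g t - a) * (g t - b)) +
        ∑ k ∈ Finset.Icc 2 (n - 2),
          divDiff (Set.Icc a b) f (a :: a :: List.replicate k b) *
            A (fun t => (g t - a) ^ 2 * (g t - b) ^ (k - 1))) ∧
    (Even n →
      A (fun t => f (g t)) - (b - A g) / (b - a) * f a - (A g - a) / (b - a) * f b ≤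
        (∑ k ∈ Finset.Icc 2 (n - 1),
          divDiff (Set.Icc a b) f (a :: List.replicate k b) *
            A (fun t => (g t - a) * (g t - b) ^ (k - 1))) ∧
      divDiff (Set.Icc a b) f [a, a, b] * A (fun t => (g t - a) * (g t - b)) +
        (∑ k ∈ Finset.Icc 2 (n - 2),
          divDiff (Set.Icc a b) f (a :: a :: List.replicate k b) *
            A (fun t => (g t - a) ^ 2 * (g t - b) ^ (k - 1))) ≤
      A (fun t => f (g t)) - (b - A g) / (b - a) * f a - (A g - a) / (b - a) * f b) := by
  have hba : (0:ℝ) < b - a := by linarith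
  have hbane : b - a ≠ 0 := ne_of_gt hba
  set c0 := (b * f a - a * f b)/(b-a) with hc0
  set c1 := (f b - f a)/(b-a) with hc1
  have hlin : ∀ x : ℝ, ((b-x)*f a + (x-a)*f b)/(b-a) = c0 + c1*x := by
    intro x; rw [hc0, hc1]; field_simp; ring
  have hconst : ∀ c : ℝ, A (fun _ => c) = c := by
    intro c
    have h : (fun _ : E => c) = c • (fun _ : E => (1:ℝ)) := by funext t; simp
    rw [h, map_smul, hA1, smul_eq_mul, mul_one]
  have hAmono : ∀ p q : E → ℝ, (∀ t, p t ≤ q t) → A p ≤ A q := by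
    intro p q hpq
    have h := hApos (q - p) (fun t => by simpa using sub_nonneg.2 (hpq t))
    rw [map_sub] at h
    linarith
  have hAgen : ∀ (I : Finset ℕ) (coef : ℕ → ℝ) (u : ℕ → E → ℝ) (cW : ℝ) (v : E → ℝ),
      A (fun t => c0 + c1 * g t + cW * v t + ∑ k ∈ I, coef k * u k t)
        = c0 + c1 * A g + cW * A v + ∑ k ∈ I, coef k * A (u k) := by
    intro I coef u cW v
    have hfe : (fun t => c0 + c1 * g t + cW * v t + ∑ k ∈ I, coef k * u k t)
        = ((fun _ => c0) + c1 • g + cW • v) + ∑ k ∈ I, coef k • u k := by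
      funext t
      simp [Finset.sum_apply]
    rw [hfe, map_add, map_add, map_add, map_sum, map_smul, map_smul, hconst]
    simp only [map_smul, smul_eq_mul]
  -- the lower comparison function applied through A
  have hAL := hAgen (Finset.Icc 2 (n-1))
    (fun k => divDiff (Set.Icc a b) f (a :: List.replicate k b))
    (fun k => fun t => (g t - a) * (g t - b) ^ (k - 1)) 0 (fun _ => 0)
  have hAU := hAgen (Finset.Icc 2 (n-2))
    (fun k => divDiff (Set.Icc a b) f (a :: a :: List.replicate k b))
    (fun k => fun t => (g t - a) ^ 2 * (g t - b) ^ (k - 1))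
    (divDiff (Set.Icc a b) f [a, a, b]) (fun t => (g t - a) * (g t - b))
  have hc0c1 : c0 + c1 * A g = (b - A g)/(b-a) * f a + (A g - a)/(b-a) * f b := by
    rw [hc0, hc1]; field_simp; ring
  -- pointwise decompositions
  have hdec1 : ∀ t : E, ∃ r, 0 ≤ r ∧ f (g t) =
      (c0 + c1 * g t + 0 * (0:ℝ) + ∑ k ∈ Finset.Icc 2 (n-1),
        divDiff (Set.Icc a b) f (a :: List.replicate k b) *
          ((g t - a) * (g t - b) ^ (k - 1)))
      + r * ((g t - a)*(g t - b)^(n-1)) := by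
    intro t
    obtain ⟨r, hr0, heq⟩ := remainder1 hab hn hf hconv (hg t)
    rw [hlin (g t)] at heq
    exact ⟨r, hr0, by rw [heq]; ring⟩
  have hdec2 : ∀ t : E, ∃ r, 0 ≤ r ∧ f (g t) =
      (c0 + c1 * g t + divDiff (Set.Icc a b) f [a, a, b] * ((g t - a) * (g t - b)) +
        ∑ k ∈ Finset.Icc 2 (n-2),
          divDiff (Set.Icc a b) f (a :: a :: List.replicate k b) *
            ((g t - a) ^ 2 * (g t - b) ^ (k - 1)))
      + r * ((g t - a)^2*(g t - b)^(n-2)) := by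
    intro t
    obtain ⟨r, hr0, heq⟩ := remainder2 hab hn hf hconv (hg t)
    rw [hlin (g t)] at heq
    exact ⟨r, hr0, by rw [heq]⟩
  constructor
  · -- odd case
    intro hodd
    obtain ⟨m, hm⟩ := hodd
    have hev1 : Even (n - 1) := ⟨m, by omega⟩
    have hodd2 : Odd (n - 2) := ⟨m - 1, by omega⟩
    constructor
    · -- lower bound
      have hpt : ∀ t : E, (c0 + c1 * g t + 0 * (0:ℝ) + ∑ k ∈ Finset.Icc 2 (n-1),
          divDiff (Set.Icc a b) f (a :: List.replicate k b) *
            ((g t - a) * (g t - b) ^ (k - 1))) ≤ f (g t) := by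
        intro t
        obtain ⟨r, hr0, heq⟩ := hdec1 t
        have h1 : 0 ≤ g t - a := by linarith [(hg t).1]
        have h2 : 0 ≤ (g t - b)^(n-1) := hev1.pow_nonneg _
        have h3 := mul_nonneg hr0 (mul_nonneg h1 h2)
        linarith [heq.ge, heq.le, h3, heq ▸ le_refl (f (g t))]
      have h4 := hAmono _ _ hpt
      rw [hAL] at h4
      rw [hc0c1] at h4
      -- h4 : ... + 0 * A .. + Σ ≤ A (fun t => f (g t))
      simp only [zero_mul, add_zero, zero_add] at h4 ⊢
      linarith [h4]
    · -- upper bound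
      have hpt : ∀ t : E, f (g t) ≤ (c0 + c1 * g t +
          divDiff (Set.Icc a b) f [a, a, b] * ((g t - a) * (g t - b)) +
          ∑ k ∈ Finset.Icc 2 (n-2),
            divDiff (Set.Icc a b) f (a :: a :: List.replicate k b) *
              ((g t - a) ^ 2 * (g t - b) ^ (k - 1))) := by
        intro t
        obtain ⟨r, hr0, heq⟩ := hdec2 t
        have h2 : (g t - b)^(n-2) ≤ 0 := hodd2.pow_nonpos (by linarith [(hg t).2])
        have h3 : (g t - a)^2*(g t - b)^(n-2) ≤ 0 :=
          mul_nonpos_of_nonneg_of_nonpos (sq_nonneg _) h2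
        have h4 := mul_nonpos_of_nonneg_of_nonpos hr0 h3
        linarith [h4, heq.le]
      have h4 := hAmono _ _ hpt
      rw [hAU, hc0c1] at h4
      linarith [h4]
  · -- even case
    intro heven
    obtain ⟨m, hm⟩ := heven
    have hodd1 : Odd (n - 1) := ⟨m - 1, by omega⟩
    have hev2 : Even (n - 2) := ⟨m - 1, by omega⟩
    constructor
    · have hpt : ∀ t : E, f (g t) ≤ (c0 + c1 * g t + 0 * (0:ℝ) +
          ∑ k ∈ Finset.Icc 2 (n-1),
          divDiff (Set.Icc a b) f (a :: List.replicate k b) *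
            ((g t - a) * (g t - b) ^ (k - 1))) := by
        intro t
        obtain ⟨r, hr0, heq⟩ := hdec1 t
        have h1 : 0 ≤ g t - a := by linarith [(hg t).1]
        have h2 : (g t - b)^(n-1) ≤ 0 := hodd1.pow_nonpos (by linarith [(hg t).2])
        have h3 := mul_nonpos_of_nonneg_of_nonpos (mul_nonneg hr0 h1) h2
        have h3' : r * ((g t - a) * (g t - b)^(n-1)) ≤ 0 := by
          rw [← mul_assoc]; exact h3
        linarith [heq.le]
      have h4 := hAmono _ _ hpt
      rw [hAL, hc0c1] at h4
      simp only [zero_mul, add_zero, zero_add] at h4 ⊢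
      linarith [h4]
    · have hpt : ∀ t : E, (c0 + c1 * g t +
          divDiff (Set.Icc a b) f [a, a, b] * ((g t - a) * (g t - b)) +
          ∑ k ∈ Finset.Icc 2 (n-2),
            divDiff (Set.Icc a b) f (a :: a :: List.replicate k b) *
              ((g t - a) ^ 2 * (g t - b) ^ (k - 1))) ≤ f (g t) := by
        intro t
        obtain ⟨r, hr0, heq⟩ := hdec2 t
        have h2 : 0 ≤ (g t - b)^(n-2) := hev2.pow_nonneg _
        have h3 := mul_nonneg hr0 (mul_nonneg (sq_nonneg (g t - a)) h2)
        linarith [heq.ge, h3]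
      have h4 := hAmono _ _ hpt
      rw [hAU, hc0c1] at h4
      linarith [h4]
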